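/- Let n ≥ 1, let L be a discrete additive subgroup of ℝⁿ (with the Euclidean norm), and let D > 0 be such that every point of ℝⁿ lies at distance at most D from some element of L. Then L is generated, as an additive group, by its elements of norm at most 2·D. -/

import Mathlib

/-- The claim used in the proof of Theorem 18.0.1: a discrete additive
subgroup `L` of Euclidean `ℝⁿ` whose `D`-neighborhoods cover `ℝⁿ` is generated,
as an additive group, by its elements of norm at most `2·D`. -/
theorem stmt17 {n : ℕ} (hn : 1 ≤ n) (L : AddSubgroup (EuclideanSpace ℝ (Fin n)))
    (hdisc : DiscreteTopology L) {D : ℝ} (hD : 0 < D)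
    (hcov : ∀ x : EuclideanSpace ℝ (Fin n), ∃ l ∈ L, dist x l ≤ D) :
    L = AddSubgroup.closure {l : EuclideanSpace ℝ (Fin n) | l ∈ L ∧ ‖l‖ ≤ 2 * D} := by
  set E := EuclideanSpace ℝ (Fin n)
  set S : Set E := {l : E | l ∈ L ∧ ‖l‖ ≤ 2 * D} with hS
  -- L is closed, hence its intersection with any closed ball is finite
  have hLclosed : IsClosed (L : Set E) := AddSubgroup.isClosed_of_discrete
  have hfin : ∀ R : ℝ, ((L : Set E) ∩ Metric.closedBall 0 R).Finite := by
    intro R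
    have hc : IsCompact ((L : Set E) ∩ Metric.closedBall 0 R) :=
      (isCompact_closedBall (0 : E) R).inter_left hLclosed
    have hsub : ((L : Set E) ∩ Metric.closedBall 0 R) ⊆ (L : Set E) :=
      Set.inter_subset_left
    have : DiscreteTopology ((L : Set E) ∩ Metric.closedBall 0 R : Set E) :=
      DiscreteTopology.of_subset hdisc hsub
    exact hc.finite (isDiscrete_iff_discreteTopology.mpr this)
  -- the set of lattice points of norm strictly smaller than ‖x‖
  set A : E → Set E := fun x => {y : E | y ∈ L ∧ ‖y‖ < ‖x‖} with hA
  have hAfin : ∀ x : E, (A x).Finite := by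
    intro x
    refine (hfin ‖x‖).subset ?_
    rintro y ⟨hy, hylt⟩
    exact ⟨hy, by simpa [Metric.mem_closedBall, dist_eq_norm] using hylt.le⟩
  -- halving step
  have step : ∀ x : E, x ∈ L → 2 * D < ‖x‖ →
      ∃ m : E, m ∈ L ∧ x - m ∈ L ∧ ‖m‖ < ‖x‖ ∧ ‖x - m‖ < ‖x‖ := by
    intro x hx hbig
    obtain ⟨m, hm, hdm⟩ := hcov ((2 : ℝ)⁻¹ • x)
    have hxm : x - m ∈ L := sub_mem hx hm
    have hhalf : ‖(2 : ℝ)⁻¹ • x‖ = ‖x‖ / 2 := by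
      rw [norm_smul]; simp [norm_inv]; ring
    have hdm' : ‖(2 : ℝ)⁻¹ • x - m‖ ≤ D := by rwa [dist_eq_norm] at hdm
    have hDlt : D < ‖x‖ / 2 := by linarith
    have hm_lt : ‖m‖ < ‖x‖ := by
      have : ‖m‖ ≤ ‖(2 : ℝ)⁻¹ • x‖ + ‖(2 : ℝ)⁻¹ • x - m‖ := by
        calc ‖m‖ = ‖(2 : ℝ)⁻¹ • x - ((2 : ℝ)⁻¹ • x - m)‖ := by
              congr 1; module
          _ ≤ ‖(2 : ℝ)⁻¹ • x‖ + ‖(2 : ℝ)⁻¹ • x - m‖ := norm_sub_le _ _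
      rw [hhalf] at this
      linarith
    have hxm_eq : x - (2 : ℝ)⁻¹ • x = (2 : ℝ)⁻¹ • x := by module
    have hxm_lt : ‖x - m‖ < ‖x‖ := by
      have : ‖x - m‖ ≤ ‖x - (2 : ℝ)⁻¹ • x‖ + ‖(2 : ℝ)⁻¹ • x - m‖ := by
        calc ‖x - m‖ = ‖(x - (2 : ℝ)⁻¹ • x) + ((2 : ℝ)⁻¹ • x - m)‖ := by
              congr 1; module
          _ ≤ _ := norm_add_le _ _
      rw [hxm_eq, hhalf] at this
      linarith
    exact ⟨m, hm, hxm, hm_lt, hxm_lt⟩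
  -- main induction on the number of lattice points of smaller norm
  have key : ∀ N : ℕ, ∀ x : E, x ∈ L → (A x).ncard ≤ N → x ∈ AddSubgroup.closure S := by
    intro N
    induction N with
    | zero =>
      intro x hx hcard
      by_cases hle : ‖x‖ ≤ 2 * D
      · exact AddSubgroup.subset_closure ⟨hx, hle⟩
      · obtain ⟨m, hm, _, hmlt, _⟩ := step x hx (lt_of_not_ge hle)
        have hmem : m ∈ A x := ⟨hm, hmlt⟩
        have : 0 < (A x).ncard :=
          (Set.ncard_pos (hAfin x)).mpr ⟨m, hmem⟩
        omega
    | succ N ih =>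
      intro x hx hcard
      by_cases hle : ‖x‖ ≤ 2 * D
      · exact AddSubgroup.subset_closure ⟨hx, hle⟩
      · obtain ⟨m, hm, hxm, hmlt, hxmlt⟩ := step x hx (lt_of_not_ge hle)
        have hsub : ∀ y : E, y ∈ L → ‖y‖ < ‖x‖ → (A y).ncard < (A x).ncard := by
          intro y hy hylt
          refine Set.ncard_lt_ncard ?_ (hAfin x)
          constructor
          · rintro z ⟨hz, hzlt⟩; exact ⟨hz, hzlt.trans hylt⟩
          · intro hcontra
            have : y ∈ A y := hcontra ⟨hy, hylt⟩
            exact lt_irrefl _ this.2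
        have h1 : (A m).ncard ≤ N := by
          have := hsub m hm hmlt; omega
        have h2 : (A (x - m)).ncard ≤ N := by
          have := hsub (x - m) hxm hxmlt; omega
        have hm' := ih m hm h1
        have hxm' := ih (x - m) hxm h2
        have : m + (x - m) ∈ AddSubgroup.closure S := add_mem hm' hxm'
        simpa using this
  apply le_antisymm
  · intro x hx
    exact key (A x).ncard x hx le_rfl
  · rw [AddSubgroup.closure_le]
    intro x hx
    exact hx.1
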